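/- Let Θ' : F_n → M_n be any truncated Magnus expansion and let φ ∈ Aut(F_n) satisfy |φ| = id_H. Then for all γ ∈ F_n: θ'₂(γ) − θ'₂(φ⁻¹(γ)) = θ₂(γ) − θ₂(φ⁻¹(γ)). (The twisted 1-cocycle τ₁ restricted to automorphisms acting trivially on H — in particular to the image of the pure braid group — is independent of the choice of Magnus expansion.) -/

import Mathlib

noncomputable section
open scoped TensorProduct


/-- `H = Fin n →₀ ℤ`, the first integral homology of the free group. -/
abbrev Hz (n : ℕ) : Type := Fin n →₀ ℤ

/-- The standard basis vector `X i`. -/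
def Xz (n : ℕ) (i : Fin n) : Hz n := Finsupp.single i 1

/-- `H ⊗ℤ H`. -/
abbrev HHz (n : ℕ) : Type := Hz n ⊗[ℤ] Hz n

/-- The degree ≤ 2 truncation of the Magnus algebra: underlying set `H × (H ⊗ H)`,
with multiplication `(u,s)·(u',s') = (u+u', s+s'+u⊗u')`. -/
def Mn (n : ℕ) : Type := Hz n × HHz n

namespace Mn

variable {n : ℕ}

instance : Group (Mn n) where
  mul a b := (a.1 + b.1, a.2 + b.2 + a.1 ⊗ₜ[ℤ] b.1)
  one := ((0 : Hz n), (0 : HHz n))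
  inv a := (-a.1, -a.2 + a.1 ⊗ₜ[ℤ] a.1)
  mul_assoc a b c := by
    show (_, _) = (_, _)
    refine Prod.ext (add_assoc _ _ _) ?_
    show a.2 + b.2 + a.1 ⊗ₜ[ℤ] b.1 + c.2 + (a.1 + b.1) ⊗ₜ[ℤ] c.1
        = a.2 + (b.2 + c.2 + b.1 ⊗ₜ[ℤ] c.1) + a.1 ⊗ₜ[ℤ] (b.1 + c.1)
    rw [TensorProduct.add_tmul, TensorProduct.tmul_add]
    abel
  one_mul a := by
    show ((0 : Hz n) + a.1, (0 : HHz n) + a.2 + (0 : Hz n) ⊗ₜ[ℤ] a.1) = a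
    rw [TensorProduct.zero_tmul]
    simp
    rfl
  mul_one a := by
    show (a.1 + 0, a.2 + (0:HHz n) + a.1 ⊗ₜ[ℤ] (0 : Hz n)) = a
    rw [TensorProduct.tmul_zero]
    simp
    rfl
  inv_mul_cancel a := by
    show (-a.1 + a.1, (-a.2 + a.1 ⊗ₜ[ℤ] a.1) + a.2 + (-a.1) ⊗ₜ[ℤ] a.1) = ((0:Hz n), (0:HHz n))
    rw [TensorProduct.neg_tmul]
    refine Prod.ext (by simp) ?_
    show _ = (0 : HHz n)
    abel

end Mn

/-- The truncated standard Magnus expansion `Θ : F_n →* M_n`, `x_i ↦ (X_i, 0)`. -/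
def Theta (n : ℕ) : FreeGroup (Fin n) →* Mn n :=
  FreeGroup.lift fun i => ((Xz n i, 0) : Mn n)

/-- The abelianization map `a : F_n → H`, the first component of `Θ`. -/
def aMap (n : ℕ) (γ : FreeGroup (Fin n)) : Hz n := (Theta n γ).1

/-- `θ₂`, the second component of the truncated Magnus expansion. -/
def theta2 (n : ℕ) (γ : FreeGroup (Fin n)) : HHz n := (Theta n γ).2


lemma Mn.mul_def {n : ℕ} (a b : Mn n) :
    a * b = (a.1 + b.1, a.2 + b.2 + a.1 ⊗ₜ[ℤ] b.1) := rfl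

/-- The difference of the second components of two truncated Magnus expansions is a
homomorphism. -/
def diffHom (n : ℕ) (Θ' : FreeGroup (Fin n) →* Mn n)
    (hΘ' : ∀ γ : FreeGroup (Fin n), (Θ' γ).1 = aMap n γ) :
    FreeGroup (Fin n) →* Multiplicative (HHz n) where
  toFun γ := Multiplicative.ofAdd ((Θ' γ).2 - theta2 n γ)
  map_one' := by
    simp [theta2]
  map_mul' γ δ := by
    have h1 : (Θ' (γ * δ)).2 = (Θ' γ).2 + (Θ' δ).2 + aMap n γ ⊗ₜ[ℤ] aMap n δ := by
      rw [map_mul, Mn.mul_def, hΘ' γ, hΘ' δ]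
    have h2 : theta2 n (γ * δ) = theta2 n γ + theta2 n δ + aMap n γ ⊗ₜ[ℤ] aMap n δ := by
      show (Theta n (γ * δ)).2 = _
    -- unfold
      rw [map_mul, Mn.mul_def]
      rfl
    show Multiplicative.ofAdd _ = Multiplicative.ofAdd _ * Multiplicative.ofAdd _
    rw [← ofAdd_add]
    congr 1
    rw [h1, h2]
    abel

lemma aMap_of (n : ℕ) (i : Fin n) : aMap n (FreeGroup.of i) = Finsupp.single i 1 := by
  show (Theta n (FreeGroup.of i)).1 = _
  have h : Theta n (FreeGroup.of i) = ((Xz n i, 0) : Mn n) :=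
    FreeGroup.lift_apply_of (β := Mn n) (f := fun i => ((Xz n i, 0) : Mn n))
  rw [h]
  rfl

lemma diff_eq (n : ℕ) (Θ' : FreeGroup (Fin n) →* Mn n)
    (hΘ' : ∀ γ : FreeGroup (Fin n), (Θ' γ).1 = aMap n γ)
    {γ δ : FreeGroup (Fin n)} (h : aMap n γ = aMap n δ) :
    (Θ' γ).2 - theta2 n γ = (Θ' δ).2 - theta2 n δ := by
  -- factor diffHom through aMap
  set f : Hz n →+ HHz n :=
    (Finsupp.linearCombination ℤ
      (fun i => (Θ' (FreeGroup.of i)).2 - theta2 n (FreeGroup.of i))).toAddMonoidHom with hf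
  have key : ∀ ε : FreeGroup (Fin n), (Θ' ε).2 - theta2 n ε = f (aMap n ε) := by
    -- compare two monoid homs into Multiplicative (HHz n)
    have hA : ∀ ε δ : FreeGroup (Fin n), aMap n (ε * δ) = aMap n ε + aMap n δ := by
      intro ε δ
      show (Theta n (ε * δ)).1 = _
      rw [map_mul, Mn.mul_def]
      rfl
    let A : FreeGroup (Fin n) →* Multiplicative (Hz n) :=
      { toFun := fun ε => Multiplicative.ofAdd (aMap n ε)
        map_one' := by simp [aMap]; rfl
        map_mul' := fun ε δ => by
          show Multiplicative.ofAdd _ = Multiplicative.ofAdd _ * Multiplicative.ofAdd _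
          rw [← ofAdd_add, hA] }
    have := FreeGroup.ext_hom (diffHom n Θ' hΘ')
      ((AddMonoidHom.toMultiplicative f).comp A) ?_
    · intro ε
      have := congrArg Multiplicative.toAdd (congrFun (congrArg DFunLike.coe this) ε)
      simpa [diffHom, A] using this
    · intro i
      show Multiplicative.ofAdd ((Θ' (FreeGroup.of i)).2 - theta2 n (FreeGroup.of i))
        = Multiplicative.ofAdd (f (aMap n (FreeGroup.of i)))
      congr 1
      rw [aMap_of, hf]
      simp [Finsupp.linearCombination_single]
  rw [key γ, key δ, h]

theorem stmt14 (n : ℕ) (hn : 2 ≤ n)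
    (Θ' : FreeGroup (Fin n) →* Mn n)
    (hΘ' : ∀ γ : FreeGroup (Fin n), (Θ' γ).1 = aMap n γ)
    (φ : MulAut (FreeGroup (Fin n)))
    (hφ : ∀ γ : FreeGroup (Fin n), aMap n (φ γ) = aMap n γ) :
    ∀ γ : FreeGroup (Fin n),
      (Θ' γ).2 - (Θ' (φ⁻¹ γ)).2 = theta2 n γ - theta2 n (φ⁻¹ γ) := by
  intro γ
  have ha : aMap n γ = aMap n (φ⁻¹ γ) := by
    have := hφ (φ⁻¹ γ)
    simp only [MulAut.apply_inv_self] at this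
    exact this
  have h := diff_eq n Θ' hΘ' ha
  rw [sub_eq_sub_iff_sub_eq_sub]
  exact h
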